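/- Let (a_𝐧)_{𝐧∈ℕ₀^d} be the coefficients of a d-multiple Walsh series and let τ be the quasimeasure generated by this series. If 𝐠 ∉ supp τ, then there exists w ∈ ℕ₀ such that the rectangular partial sums satisfy S_{2^w𝐌}(𝐠) = 0 for all 𝐌 ∈ ℕ^d, where 2^w𝐌 = (2^w M^1,…,2^w M^d). -/

import Mathlib

open Filter Finset Topology MeasureTheory
open scoped Classical

noncomputable section

instance : TopologicalSpace (ZMod 2) := ⊥
instance : DiscreteTopology (ZMod 2) := ⟨rfl⟩

/-- The dyadic (Cantor) group `𝔾`: sequences of elements of `ℤ/2ℤ`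
with coordinatewise addition modulo 2, Tychonoff topology. -/
abbrev DyadicGroup : Type := ℕ → ZMod 2

instance : MeasurableSpace DyadicGroup := borel _
instance : BorelSpace DyadicGroup := ⟨rfl⟩

/-- `𝔾^d`. -/
abbrev GD (d : ℕ) : Type := Fin d → DyadicGroup

/-- One-dimensional Walsh function `W_n` in the Paley enumeration:
`W_n(g) = ∏_k (-1)^(g_k n_k)`. -/
def walsh (n : ℕ) (g : DyadicGroup) : ℝ :=
  ∏ k ∈ Finset.range n, if n.testBit k ∧ g k = 1 then (-1 : ℝ) else 1

/-- `d`-dimensional Walsh function `W_𝐧(𝐠) = ∏ W_{n^l}(g^l)`. -/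
def walshD {d : ℕ} (n : Fin d → ℕ) (g : GD d) : ℝ :=
  ∏ l, walsh (n l) (g l)

/-- The dyadic interval `Δ^{(k)}_m` of rank `k`. -/
def dyadicInterval (k m : ℕ) : Set DyadicGroup :=
  {g | ∀ t < k, g t = if m.testBit (k - 1 - t) then 1 else 0}

/-- The dyadic cube `Δ^{(k)}_𝐦 = Δ^{(k)}_{m^1} × ⋯ × Δ^{(k)}_{m^d}`. -/
def dyadicCube {d : ℕ} (k : ℕ) (m : Fin d → ℕ) : Set (GD d) :=
  {g | ∀ l, g l ∈ dyadicInterval k (m l)}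

/-- The canonical point of `Δ^{(k)}_m`. -/
def intervalPoint (k m : ℕ) : DyadicGroup :=
  fun t => if t < k ∧ m.testBit (k - 1 - t) then 1 else 0

/-- The canonical point of `Δ^{(k)}_𝐦`. -/
def cubePoint {d : ℕ} (k : ℕ) (m : Fin d → ℕ) : GD d :=
  fun l => intervalPoint k (m l)

/-- `W^{(k)}_{n,m}`: the (constant, for `n < 2^k`) value of `W_n` on `Δ^{(k)}_m`. -/
def walshVal (k n m : ℕ) : ℝ := walsh n (intervalPoint k m)

/-- `W^{(k)}_{𝐧𝐦}`: the (constant, for `𝐧 < 2^k·𝟏`) value of `W_𝐧` on `Δ^{(k)}_𝐦`. -/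
def walshValD {d : ℕ} (k : ℕ) (n m : Fin d → ℕ) : ℝ := walshD n (cubePoint k m)

/-- The box `{𝐧 : 𝐧 < 𝐍}` as a finset. -/
def boxLt {d : ℕ} (N : Fin d → ℕ) : Finset (Fin d → ℕ) :=
  Fintype.piFinset fun l => Finset.range (N l)

/-- The box `{0,…,2^k−1}^d` as a set. -/
def box (d k : ℕ) : Set (Fin d → ℕ) := {m | ∀ l, m l < 2 ^ k}

/-- The rectangular partial sum `S_𝐍(𝐠)` of the Walsh series with coefficients `a`. -/
def walshPartialSum {d : ℕ} (a : (Fin d → ℕ) → ℂ) (N : Fin d → ℕ) (g : GD d) : ℂ :=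
  ∑ n ∈ boxLt N, a n * (walshD n g : ℂ)

/-- Convergence over rectangles: `S_𝐍(𝐠) → S` as `min_j N^j → ∞`. -/
def ConvergesOverRectangles {d : ℕ} (a : (Fin d → ℕ) → ℂ) (g : GD d) (S : ℂ) : Prop :=
  Tendsto (fun N : Fin d → ℕ => walshPartialSum a N g) atTop (𝓝 S)

/-- Convergence over cubes: `S_{N𝟏}(𝐠) → S` as `N → ∞`. -/
def ConvergesOverCubes {d : ℕ} (a : (Fin d → ℕ) → ℂ) (g : GD d) (S : ℂ) : Prop :=
  Tendsto (fun N : ℕ => walshPartialSum a (fun _ => N) g) atTop (𝓝 S)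

/-- `λ`-convergence: `S_𝐍(𝐠) → S` as `min_j N^j → ∞` along `𝐍` with `max N^j/N^k ≤ λ`. -/
def LambdaConverges {d : ℕ} (lam : ℝ) (a : (Fin d → ℕ) → ℂ) (g : GD d) (S : ℂ) : Prop :=
  ∀ ε : ℝ, 0 < ε → ∃ K : ℕ, ∀ N : Fin d → ℕ, (∀ j, K ≤ N j) →
    (∀ j k, (N j : ℝ) ≤ lam * N k) → ‖walshPartialSum a N g - S‖ < ε

/-- Auxiliary predicate for iterated summation of a multiple series with terms `f`;
the list gives the order of summation, *innermost index first*.  After summing the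
series in the variables of the list, the remaining (partially summed) function is `g`. -/
def IterConvAux {d : ℕ} : List (Fin d) → ((Fin d → ℕ) → ℂ) → ((Fin d → ℕ) → ℂ) → Prop
  | [], f, g => f = g
  | j :: rest, f, g => ∃ h : (Fin d → ℕ) → ℂ,
      (∀ n, Tendsto (fun T : ℕ => ∑ t ∈ Finset.range T, f (Function.update n j t))
        atTop (𝓝 (h n))) ∧ IterConvAux rest h g

/-- The multiple series with terms `f` converges iteratedly to `S`, the order of
summation being given by the list `l` (innermost index first): all successively
nested inner series converge and the full iterated sum equals `S`. -/
def IterConverges {d : ℕ} (l : List (Fin d)) (f : (Fin d → ℕ) → ℂ) (S : ℂ) : Prop :=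
  ∃ g, IterConvAux l f g ∧ ∀ n, g n = S

/-- `A` is an M-set for the `d`-dimensional Walsh system under rectangular convergence. -/
def IsMSetRect {d : ℕ} (A : Set (GD d)) : Prop :=
  ∃ a : (Fin d → ℕ) → ℂ, (∃ n, a n ≠ 0) ∧ ∀ g ∉ A, ConvergesOverRectangles a g 0

/-- `A` is an M-set for the `d`-dimensional Walsh system under convergence over cubes. -/
def IsMSetCubes {d : ℕ} (A : Set (GD d)) : Prop :=
  ∃ a : (Fin d → ℕ) → ℂ, (∃ n, a n ≠ 0) ∧ ∀ g ∉ A, ConvergesOverCubes a g 0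

/-- `A` is an M-set under iterated convergence with summation order `l` (innermost first). -/
def IsMSetIter {d : ℕ} (A : Set (GD d)) (l : List (Fin d)) : Prop :=
  ∃ a : (Fin d → ℕ) → ℂ, (∃ n, a n ≠ 0) ∧
    ∀ g ∉ A, IterConverges l (fun n => a n * (walshD n g : ℂ)) 0

/-- `A` is an M-set for the `d`-dimensional Walsh system under `λ`-convergence. -/
def IsMSetLambda {d : ℕ} (lam : ℝ) (A : Set (GD d)) : Prop :=
  ∃ a : (Fin d → ℕ) → ℂ, (∃ n, a n ≠ 0) ∧ ∀ g ∉ A, LambdaConverges lam a g 0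

/-- A quasimeasure: a finitely additive function on dyadic cubes (indexed by rank
`k` and position `𝐦 < 2^k·𝟏`). -/
def IsQuasimeasure {d : ℕ} (τ : ℕ → (Fin d → ℕ) → ℂ) : Prop :=
  ∀ k m, (∀ l, m l < 2 ^ k) →
    τ k m = ∑ σ : Fin d → Fin 2, τ (k + 1) fun l => 2 * m l + (σ l : ℕ)

/-- The quasimeasure generated by the Walsh series with coefficients `a`:
`τ(Δ^{(k)}_𝐦) = 2^{-kd} ∑_{𝐧<2^k𝟏} a_𝐧 W_𝐧(Δ^{(k)}_𝐦)`. -/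
def genQM {d : ℕ} (a : (Fin d → ℕ) → ℂ) (k : ℕ) (m : Fin d → ℕ) : ℂ :=
  ((2 : ℂ) ^ (k * d))⁻¹ * ∑ n ∈ boxLt (fun _ : Fin d => 2 ^ k), a n * (walshValD k n m : ℂ)

/-- The Fourier–Walsh coefficient `τ̂_𝐧` of a quasimeasure `τ`, computed at resolution `k`
(the value does not depend on `k` as long as `𝐧 < 2^k𝟏`). -/
def fourierCoeffAt {d : ℕ} (τ : ℕ → (Fin d → ℕ) → ℂ) (n : Fin d → ℕ) (k : ℕ) : ℂ :=
  ∑ m ∈ boxLt (fun _ : Fin d => 2 ^ k), (walshValD k n m : ℂ) * τ k m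

/-- The local Fourier–Walsh coefficient `τ̂_𝐧(Δ^{(r)}_{𝐦Δ})`, computed at resolution `k ≥ r`. -/
def localCoeffAt {d : ℕ} (τ : ℕ → (Fin d → ℕ) → ℂ) (n : Fin d → ℕ)
    (r : ℕ) (mΔ : Fin d → ℕ) (k : ℕ) : ℂ :=
  ∑ m ∈ (boxLt (fun _ : Fin d => 2 ^ k)).filter
      (fun m => dyadicCube k m ⊆ dyadicCube r mΔ),
    (walshValD k n m : ℂ) * τ k m

/-- The support of a quasimeasure: the complement of the union of all dyadic cubes `Δ₀`
such that `τ(Δ) = 0` for every dyadic cube `Δ ⊆ Δ₀`. -/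
def qmSupport {d : ℕ} (τ : ℕ → (Fin d → ℕ) → ℂ) : Set (GD d) :=
  (⋃ k, ⋃ m ∈ box d k,
    ⋃ (_ : ∀ k' m', (∀ l, m' l < 2 ^ k') →
        dyadicCube k' m' ⊆ dyadicCube k m → τ k' m' = 0),
    dyadicCube k m)ᶜ

/-- The restriction `τ|_{Δ̃}` of a quasimeasure to the dyadic cube `Δ̃ = Δ^{(r)}_{𝐦Δ}`:
`τ|_{Δ̃}(Δ) = τ(Δ̃ ∩ Δ)` (two dyadic cubes are nested or disjoint). -/
def restrictQM {d : ℕ} (τ : ℕ → (Fin d → ℕ) → ℂ) (r : ℕ) (mΔ : Fin d → ℕ) :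
    ℕ → (Fin d → ℕ) → ℂ := fun k m =>
  if dyadicCube k m ⊆ dyadicCube (d := d) r mΔ then τ k m
  else if dyadicCube (d := d) r mΔ ⊆ dyadicCube k m then τ r mΔ
  else 0

/-- `τ` is the canonical quasimeasure `τ_E` associated with a (nonempty closed) set `E`:
`τ(𝔾^d) = 1`; `τ(Δ) = 0` iff `Δ ∩ E = ∅`; and the mass of a cube meeting `E` is divided
equally among its `2^d` immediate subcubes that meet `E`. -/
def IsTauOf {d : ℕ} (E : Set (GD d)) (τ : ℕ → (Fin d → ℕ) → ℂ) : Prop :=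
  IsQuasimeasure τ ∧
  τ 0 (fun _ => 0) = 1 ∧
  (∀ k m, (∀ l, m l < 2 ^ k) → (τ k m = 0 ↔ dyadicCube k m ∩ E = ∅)) ∧
  (∀ k m, (∀ l, m l < 2 ^ k) → (dyadicCube k m ∩ E).Nonempty →
    ∀ σ : Fin d → Fin 2,
      τ (k + 1) (fun l => 2 * m l + (σ l : ℕ)) =
        if (dyadicCube (k + 1) (fun l => 2 * m l + (σ l : ℕ)) ∩ E).Nonempty then
          τ k m / ((Finset.univ.filter fun σ' : Fin d → Fin 2 =>
              (dyadicCube (k + 1) (fun l => 2 * m l + (σ' l : ℕ)) ∩ E).Nonempty).card : ℂ)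
        else 0)

/-- The sequence `m_s`: `m_1 = 0`, `m_{s+1} = 2(2m_s+1)` (value at `0` is junk). -/
def mSeq : ℕ → ℕ
  | 0 => 0
  | s + 1 => if s = 0 then 0 else 2 * (2 * mSeq s + 1)

/-- The layer `F_s^π`. -/
def Fspi {d : ℕ} (π : ℕ → (Fin d → ℕ) → Fin d → ℕ) (s : ℕ) : Set (GD d) :=
  ⋃ m ∈ box d (mSeq s), ⋃ m' ∈ box d (mSeq s),
    {g | g ∈ dyadicCube (2 * mSeq s) (fun l => 2 ^ mSeq s * m l + m' l) ∧
      walshD (fun _ => 2 ^ (2 * mSeq s)) g = walshValD (mSeq s) (π s m) m'}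

/-- `F̃_s^π = F_1^π ∩ ⋯ ∩ F_s^π` (so `F̃_0^π = 𝔾^d`). -/
def Ftil {d : ℕ} (π : ℕ → (Fin d → ℕ) → Fin d → ℕ) (s : ℕ) : Set (GD d) :=
  ⋂ k ∈ Finset.Icc 1 s, Fspi π k

/-- `F^π = ⋂_{s≥1} F_s^π`. -/
def Fpi {d : ℕ} (π : ℕ → (Fin d → ℕ) → Fin d → ℕ) : Set (GD d) :=
  ⋂ s ∈ Set.Ici 1, Fspi π s

/-- The identity element of `S` (yielding `F_s`, `F̃_s` and `F` themselves). -/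
def idPerm (d : ℕ) : ℕ → (Fin d → ℕ) → Fin d → ℕ := fun _ m => m

/-- `S`: sequences `π = (π_s)` of permutations of the boxes `{0,…,2^{m_s}−1}^d`. -/
structure PermSeq (d : ℕ) where
  p : ℕ → Equiv.Perm (Fin d → ℕ)
  maps : ∀ s, Set.MapsTo (p s) (box d (mSeq s)) (box d (mSeq s))

/-- The underlying sequence of functions of an element of `S`. -/
def PermSeq.f {d : ℕ} (π : PermSeq d) : ℕ → (Fin d → ℕ) → Fin d → ℕ := fun s => ⇑(π.p s)

/-- `π ∈ S'`: every `π_s` acts coordinatewise, `π_s(𝐦) = (π_s^1(m^1),…,π_s^d(m^d))`. -/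
def PermSeq.Coordinatewise {d : ℕ} (π : PermSeq d) : Prop :=
  ∀ s, ∃ e : Fin d → ℕ → ℕ, ∀ m : Fin d → ℕ, π.p s m = fun l => e l (m l)

/-- The Dirichlet kernel `D_N = ∑_{n<N} W_n` of the one-dimensional Walsh system. -/
def dirichlet (N : ℕ) (g : DyadicGroup) : ℝ :=
  ∑ n ∈ Finset.range N, walsh n g
/-! Auxiliary lemmas -/

lemma zmod2_cases (x : ZMod 2) : x = 0 ∨ x = 1 := by revert x; decide

def walshAux (K n : ℕ) (g : DyadicGroup) : ℝ :=
  ∏ k ∈ Finset.range K, if n.testBit k ∧ g k = 1 then (-1 : ℝ) else 1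

lemma walsh_eq_walshAux {K n : ℕ} (hn : n < 2 ^ K) (g : DyadicGroup) :
    walsh n g = walshAux K n g := by
  unfold walsh walshAux
  rcases le_total n K with h | h
  · refine Finset.prod_subset (Finset.range_subset_range.2 h) ?_
    intro k _ hk
    simp only [Finset.mem_range, not_lt] at hk
    have : n.testBit k = false :=
      Nat.testBit_lt_two_pow (lt_of_lt_of_le (Nat.lt_two_pow_self (n := n))
        (Nat.pow_le_pow_right (by norm_num) hk))
    simp [this]
  · refine (Finset.prod_subset (Finset.range_subset_range.2 h) ?_).symm
    intro k _ hk
    simp only [Finset.mem_range, not_lt] at hk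
    have : n.testBit k = false :=
      Nat.testBit_lt_two_pow (lt_of_lt_of_le hn (Nat.pow_le_pow_right (by norm_num) hk))
    simp [this]

lemma walshAux_xor {K n t : ℕ} (ht : t < K) (g : DyadicGroup) :
    walshAux K (n ^^^ 2 ^ t) g = (if g t = 1 then (-1:ℝ) else 1) * walshAux K n g := by
  unfold walshAux
  rw [← Finset.mul_prod_erase _ _ (Finset.mem_range.2 ht),
      ← Finset.mul_prod_erase _ (fun k => if n.testBit k ∧ g k = 1 then (-1:ℝ) else 1)
        (Finset.mem_range.2 ht), ← mul_assoc]
  have herase : ∀ k ∈ (Finset.range K).erase t,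
      (if (n ^^^ 2 ^ t).testBit k ∧ g k = 1 then (-1:ℝ) else 1)
        = (if n.testBit k ∧ g k = 1 then (-1:ℝ) else 1) := by
    intro k hk
    have hkt : k ≠ t := (Finset.mem_erase.1 hk).1
    have : (n ^^^ 2 ^ t).testBit k = n.testBit k := by
      simp [Nat.testBit_xor, Nat.testBit_two_pow, hkt.symm]
    rw [this]
  rw [Finset.prod_congr rfl herase]
  congr 1
  have hbit : (n ^^^ 2 ^ t).testBit t = !n.testBit t := by
    simp [Nat.testBit_xor, Nat.testBit_two_pow]
  by_cases hg : g t = 1 <;> by_cases hb : n.testBit t <;>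
    simp [hbit, hg, hb]

lemma walshAux_flip {K n t : ℕ} (ht : t < K) (g g' : DyadicGroup)
    (hsame : ∀ k, k ≠ t → g' k = g k) (hflip : g' t ≠ g t) :
    walshAux K n g' = (if n.testBit t then (-1:ℝ) else 1) * walshAux K n g := by
  unfold walshAux
  rw [← Finset.mul_prod_erase _ _ (Finset.mem_range.2 ht),
      ← Finset.mul_prod_erase _ (fun k => if n.testBit k ∧ g k = 1 then (-1:ℝ) else 1)
        (Finset.mem_range.2 ht), ← mul_assoc]
  have herase : ∀ k ∈ (Finset.range K).erase t,
      (if n.testBit k ∧ g' k = 1 then (-1:ℝ) else 1)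
        = (if n.testBit k ∧ g k = 1 then (-1:ℝ) else 1) := by
    intro k hk
    rw [hsame k (Finset.mem_erase.1 hk).1]
  rw [Finset.prod_congr rfl herase]
  congr 1
  rcases zmod2_cases (g t) with h0 | h1
  · have h1' : g' t = 1 := by
      rcases zmod2_cases (g' t) with h | h
      · exact absurd (h.trans h0.symm) hflip
      · exact h
    by_cases hb : n.testBit t <;> simp [h0, h1', hb]
  · have h0' : g' t ≠ 1 := fun h => hflip (h.trans h1.symm)
    by_cases hb : n.testBit t <;> simp [h1, h0', hb]

lemma xor_two_pow_lt {w M t n : ℕ} (ht : t < w) (hn : n < 2 ^ w * M) :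
    n ^^^ 2 ^ t < 2 ^ w * M := by
  have h2 : (0:ℕ) < 2 ^ w := Nat.pow_pos (by norm_num)
  have hmod : n % 2 ^ w < 2 ^ w := Nat.mod_lt _ h2
  have hx : (n % 2 ^ w ^^^ 2 ^ t) < 2 ^ w :=
    Nat.xor_lt_two_pow hmod (Nat.pow_lt_pow_right (by norm_num) ht)
  have hsplit : n ^^^ 2 ^ t = 2 ^ w * (n / 2 ^ w) + (n % 2 ^ w ^^^ 2 ^ t) := by
    apply Nat.eq_of_testBit_eq
    intro j
    rw [Nat.testBit_two_pow_mul_add _ hx]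
    by_cases hj : j < w
    · simp [hj, Nat.testBit_xor, Nat.testBit_mod_two_pow]
    · have h2t : (2 ^ t).testBit j = false := by
        rw [Nat.testBit_two_pow]; simp; omega
      have hdiv : (n / 2 ^ w).testBit (j - w) = n.testBit j := by
        rw [← Nat.shiftRight_eq_div_pow, Nat.testBit_shiftRight]
        congr 1; omega
      simp [hj, Nat.testBit_xor, h2t, hdiv]
  have hq : n / 2 ^ w < M := by
    rw [Nat.div_lt_iff_lt_mul h2, mul_comm]; exact hn
  calc n ^^^ 2 ^ t = 2 ^ w * (n / 2 ^ w) + (n % 2 ^ w ^^^ 2 ^ t) := hsplit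
    _ < 2 ^ w * (n / 2 ^ w) + 2 ^ w := by omega
    _ = 2 ^ w * (n / 2 ^ w + 1) := by ring
    _ ≤ 2 ^ w * M := Nat.mul_le_mul_left _ (by omega)

lemma xor_two_pow_ne (n t : ℕ) : n ^^^ 2 ^ t ≠ n := by
  intro h
  have := congrArg (fun x => x.testBit t) h
  simp [Nat.testBit_xor, Nat.testBit_two_pow] at this

lemma xor_two_pow_invol (n t : ℕ) : (n ^^^ 2 ^ t) ^^^ 2 ^ t = n := by
  rw [Nat.xor_assoc, Nat.xor_self, Nat.xor_zero]

lemma sum_walsh_walsh_eq_zero {w M t : ℕ} (ht : t < w) {p q : DyadicGroup}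
    (hpq : p t ≠ q t) :
    ∑ n ∈ Finset.range (2 ^ w * M), walsh n p * walsh n q = 0 := by
  set K := w + M with hK
  have hbound : 2 ^ w * M ≤ 2 ^ K := by
    rw [hK, pow_add]
    exact Nat.mul_le_mul_left _ (Nat.le_of_lt (Nat.lt_two_pow_self (n := M)))
  have hsign : (if p t = 1 then (-1:ℝ) else 1) * (if q t = 1 then (-1:ℝ) else 1) = -1 := by
    rcases zmod2_cases (p t) with h | h <;> rcases zmod2_cases (q t) with h' | h' <;>
      simp_all
  refine Finset.sum_involution (fun n _ => n ^^^ 2 ^ t) ?_ ?_ ?_ ?_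
  · intro n hn
    have hn' : n < 2 ^ w * M := Finset.mem_range.1 hn
    have h1 : n < 2 ^ K := lt_of_lt_of_le hn' hbound
    have h2 : n ^^^ 2 ^ t < 2 ^ K := lt_of_lt_of_le (xor_two_pow_lt ht hn') hbound
    rw [walsh_eq_walshAux h1 p, walsh_eq_walshAux h1 q,
        walsh_eq_walshAux h2 p, walsh_eq_walshAux h2 q,
        walshAux_xor (lt_of_lt_of_le ht (by omega)) p,
        walshAux_xor (lt_of_lt_of_le ht (by omega)) q]
    have hr : (if p t = 1 then (-1:ℝ) else 1) * walshAux K n p *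
        ((if q t = 1 then (-1:ℝ) else 1) * walshAux K n q)
        = ((if p t = 1 then (-1:ℝ) else 1) * (if q t = 1 then (-1:ℝ) else 1)) *
          (walshAux K n p * walshAux K n q) := by ring
    rw [hr, hsign]; ring
  · intro n _ _
    exact xor_two_pow_ne n t
  · intro n hn
    exact Finset.mem_range.2 (xor_two_pow_lt ht (Finset.mem_range.1 hn))
  · intro n _
    exact xor_two_pow_invol n t

lemma walsh_mul_self (n : ℕ) (g : DyadicGroup) : walsh n g * walsh n g = 1 := by
  unfold walsh
  rw [← Finset.prod_mul_distrib]
  apply Finset.prod_eq_one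
  intro k _
  split <;> norm_num

lemma orth1 {K n n' : ℕ} (hn : n < 2 ^ K) (hn' : n' < 2 ^ K) :
    ∑ m ∈ Finset.range (2 ^ K), walshVal K n m * walshVal K n' m
      = if n = n' then ((2:ℝ) ^ K) else 0 := by
  by_cases h : n = n'
  · subst h
    simp [walshVal, walsh_mul_self]
  · rw [if_neg h]
    obtain ⟨t, hbit⟩ : ∃ t, n.testBit t ≠ n'.testBit t := by
      by_contra hc; push_neg at hc
      exact h (Nat.eq_of_testBit_eq fun t => hc t)
    have htK : t < K := by
      by_contra hle
      push_neg at hle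
      rw [Nat.testBit_lt_two_pow (lt_of_lt_of_le hn (Nat.pow_le_pow_right (by norm_num) hle)),
          Nat.testBit_lt_two_pow (lt_of_lt_of_le hn' (Nat.pow_le_pow_right (by norm_num) hle))]
          at hbit
      exact hbit rfl
    set j := K - 1 - t with hj
    have hjK : j < K := by omega
    have hflip : ∀ m : ℕ,
        (∀ s, s ≠ t → intervalPoint K (m ^^^ 2 ^ j) s = intervalPoint K m s) ∧
          intervalPoint K (m ^^^ 2 ^ j) t ≠ intervalPoint K m t := by
      intro m
      constructor
      · intro s hs
        unfold intervalPoint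
        by_cases hsK : s < K
        · have : (m ^^^ 2 ^ j).testBit (K - 1 - s) = m.testBit (K - 1 - s) := by
            have : j ≠ K - 1 - s := by omega
            simp [Nat.testBit_xor, Nat.testBit_two_pow, this]
          rw [this]
        · simp [hsK]
      · unfold intervalPoint
        have hjt : K - 1 - t = j := rfl
        have : (m ^^^ 2 ^ j).testBit (K - 1 - t) = !m.testBit (K - 1 - t) := by
          rw [hjt]; simp [Nat.testBit_xor, Nat.testBit_two_pow]
        rw [this]
        by_cases hb : m.testBit (K - 1 - t) <;> simp [hb, htK]
    have hsign : (if n.testBit t then (-1:ℝ) else 1) * (if n'.testBit t then (-1:ℝ) else 1)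
        = -1 := by
      by_cases h1 : n.testBit t <;> by_cases h2 : n'.testBit t <;> simp_all
    refine Finset.sum_involution (fun m _ => m ^^^ 2 ^ j) ?_ ?_ ?_ ?_
    · intro m hm
      obtain ⟨hsame, hne⟩ := hflip m
      unfold walshVal
      rw [walsh_eq_walshAux hn, walsh_eq_walshAux hn',
          walsh_eq_walshAux hn (intervalPoint K (m ^^^ 2 ^ j)),
          walsh_eq_walshAux hn' (intervalPoint K (m ^^^ 2 ^ j)),
          walshAux_flip htK _ _ hsame hne, walshAux_flip htK _ _ hsame hne]
      have hr : (if n.testBit t then (-1:ℝ) else 1) * walshAux K n (intervalPoint K m) *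
          ((if n'.testBit t then (-1:ℝ) else 1) * walshAux K n' (intervalPoint K m))
          = ((if n.testBit t then (-1:ℝ) else 1) * (if n'.testBit t then (-1:ℝ) else 1)) *
            (walshAux K n (intervalPoint K m) * walshAux K n' (intervalPoint K m)) := by ring
      rw [hr, hsign]; ring
    · intro m _ _
      exact xor_two_pow_ne m j
    · intro m hm
      exact Finset.mem_range.2 (Nat.xor_lt_two_pow (Finset.mem_range.1 hm)
        (Nat.pow_lt_pow_right (by norm_num) hjK))
    · intro m _
      exact xor_two_pow_invol m j

lemma orthD {d K : ℕ} {n n' : Fin d → ℕ} (hn : ∀ l, n l < 2 ^ K) (hn' : ∀ l, n' l < 2 ^ K) :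
    ∑ m ∈ boxLt (fun _ : Fin d => 2 ^ K), walshValD K n m * walshValD K n' m
      = if n = n' then ((2:ℝ) ^ K) ^ d else 0 := by
  have hterm : ∀ m : Fin d → ℕ, walshValD K n m * walshValD K n' m
      = ∏ l, (walshVal K (n l) (m l) * walshVal K (n' l) (m l)) := by
    intro m
    unfold walshValD walshD walshVal cubePoint
    rw [← Finset.prod_mul_distrib]
  calc ∑ m ∈ boxLt (fun _ : Fin d => 2 ^ K), walshValD K n m * walshValD K n' m
      = ∑ m ∈ Fintype.piFinset (fun _ : Fin d => Finset.range (2 ^ K)),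
          ∏ l, (walshVal K (n l) (m l) * walshVal K (n' l) (m l)) :=
        Finset.sum_congr rfl fun m _ => hterm m
    _ = ∏ l, ∑ x ∈ Finset.range (2 ^ K), walshVal K (n l) x * walshVal K (n' l) x :=
        (Finset.prod_univ_sum (fun _ : Fin d => Finset.range (2 ^ K))
          (fun l x => walshVal K (n l) x * walshVal K (n' l) x)).symm
    _ = ∏ l : Fin d, if n l = n' l then ((2:ℝ) ^ K) else 0 :=
        Finset.prod_congr rfl fun l _ => orth1 (hn l) (hn' l)
    _ = _ := by
      by_cases h : n = n'
      · subst h; simp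
      · rw [if_neg h]
        obtain ⟨l, hl⟩ : ∃ l, n l ≠ n' l := by
          by_contra hc; push_neg at hc; exact h (funext hc)
        exact Finset.prod_eq_zero (Finset.mem_univ l) (if_neg hl)

lemma inversion {d K : ℕ} (a : (Fin d → ℕ) → ℂ) {n : Fin d → ℕ} (hn : ∀ l, n l < 2 ^ K) :
    ∑ m ∈ boxLt (fun _ : Fin d => 2 ^ K), (walshValD K n m : ℂ) * genQM a K m = a n := by
  have hC : ((2:ℂ) ^ (K * d)) = ((2:ℂ) ^ K) ^ d := by rw [pow_mul]
  have horth : ∀ n' : Fin d → ℕ, n' ∈ boxLt (fun _ : Fin d => 2 ^ K) →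
      ∑ m ∈ boxLt (fun _ : Fin d => 2 ^ K), (walshValD K n m : ℂ) * (walshValD K n' m : ℂ)
        = if n = n' then ((2:ℂ) ^ K) ^ d else 0 := by
    intro n' hn'
    have hb : ∀ l, n' l < 2 ^ K := fun l => Finset.mem_range.1 (Fintype.mem_piFinset.1 hn' l)
    have h1 := orthD (d := d) (K := K) hn hb
    calc ∑ m ∈ boxLt (fun _ : Fin d => 2 ^ K), (walshValD K n m : ℂ) * (walshValD K n' m : ℂ)
        = ((∑ m ∈ boxLt (fun _ : Fin d => 2 ^ K), walshValD K n m * walshValD K n' m : ℝ) : ℂ) := by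
          rw [Complex.ofReal_sum]
          exact Finset.sum_congr rfl fun m _ => by rw [Complex.ofReal_mul]
      _ = _ := by rw [h1]; split <;> push_cast <;> ring
  calc ∑ m ∈ boxLt (fun _ : Fin d => 2 ^ K), (walshValD K n m : ℂ) * genQM a K m
      = ∑ n' ∈ boxLt (fun _ : Fin d => 2 ^ K), (((2:ℂ) ^ (K * d))⁻¹ * a n') *
          ∑ m ∈ boxLt (fun _ : Fin d => 2 ^ K),
            (walshValD K n m : ℂ) * (walshValD K n' m : ℂ) := by
        unfold genQM
        simp only [Finset.mul_sum]
        rw [Finset.sum_comm]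
        exact Finset.sum_congr rfl fun n' _ => Finset.sum_congr rfl fun m _ => by ring
    _ = ∑ n' ∈ boxLt (fun _ : Fin d => 2 ^ K), (((2:ℂ) ^ (K * d))⁻¹ * a n') *
          (if n = n' then ((2:ℂ) ^ K) ^ d else 0) :=
        Finset.sum_congr rfl fun n' hn' => by rw [horth n' hn']
    _ = a n := by
        rw [Finset.sum_eq_single_of_mem n
          (show n ∈ boxLt (fun _ : Fin d => 2 ^ K) from
            Fintype.mem_piFinset.2 fun l => Finset.mem_range.2 (hn l))]
        · rw [if_pos rfl, ← hC]
          have h2 : ((2:ℂ) ^ (K * d)) ≠ 0 := pow_ne_zero _ two_ne_zero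
          field_simp
        · intro b _ hb
          rw [if_neg fun h => hb h.symm, mul_zero]

/-- if `𝐠 ∉ supp τ`, where `τ` is the quasimeasure generated by a Walsh
series, then there is `w ∈ ℕ₀` with `S_{2^w𝐌}(𝐠) = 0` for all `𝐌 ∈ ℕ^d`. -/
theorem statement5 (d : ℕ) (hd : 2 ≤ d) (a : (Fin d → ℕ) → ℂ)
    (g : GD d) (hg : g ∉ qmSupport (genQM a)) :
    ∃ w : ℕ, ∀ M : Fin d → ℕ, (∀ l, 1 ≤ M l) →
      walshPartialSum a (fun l => 2 ^ w * M l) g = 0 := by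
  rw [qmSupport, Set.notMem_compl_iff] at hg
  simp only [Set.mem_iUnion, exists_prop] at hg
  obtain ⟨k, m, hm, hτ, hgc⟩ := hg
  refine ⟨k, fun M hM => ?_⟩
  set K := k + Finset.univ.sup M with hKdef
  have hkK : k ≤ K := Nat.le_add_right _ _
  have hNK : ∀ l, 2 ^ k * M l ≤ 2 ^ K := by
    intro l
    calc 2 ^ k * M l ≤ 2 ^ k * 2 ^ (Finset.univ.sup M) :=
          Nat.mul_le_mul_left _ (le_trans (Finset.le_sup (Finset.mem_univ l))
            (Nat.le_of_lt Nat.lt_two_pow_self))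
      _ = 2 ^ K := by rw [hKdef, pow_add]
  unfold walshPartialSum
  have hcoef : ∀ n ∈ boxLt (fun l => 2 ^ k * M l),
      a n = ∑ m' ∈ boxLt (fun _ : Fin d => 2 ^ K), (walshValD K n m' : ℂ) * genQM a K m' := by
    intro n hn
    refine (inversion a ?_).symm
    intro l
    exact lt_of_lt_of_le (Finset.mem_range.1 (Fintype.mem_piFinset.1 hn l)) (hNK l)
  rw [Finset.sum_congr rfl fun n hn => by rw [hcoef n hn]]
  simp only [Finset.sum_mul]
  rw [Finset.sum_comm]
  refine Finset.sum_eq_zero ?_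
  intro m' hm'
  have hm'b : ∀ l, m' l < 2 ^ K := fun l => Finset.mem_range.1 (Fintype.mem_piFinset.1 hm' l)
  have hterm : ∑ n ∈ boxLt (fun l => 2 ^ k * M l),
      (walshValD K n m' : ℂ) * genQM a K m' * (walshD n g : ℂ)
      = genQM a K m' * ((∑ n ∈ boxLt (fun l => 2 ^ k * M l),
          walshValD K n m' * walshD n g : ℝ) : ℂ) := by
    rw [Complex.ofReal_sum, Finset.mul_sum]
    exact Finset.sum_congr rfl fun n _ => by push_cast; ring
  rw [hterm]
  by_cases hsub : ∀ l, ∀ t, t < k → intervalPoint K (m' l) t = g l t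
  · have hsubset : dyadicCube K m' ⊆ dyadicCube k m := by
      intro h hh
      intro l t htk
      have htK : t < K := lt_of_lt_of_le htk hkK
      have h1 : h l t = intervalPoint K (m' l) t := by
        rw [hh l t htK]
        simp [intervalPoint, htK]
      rw [h1, hsub l t htk]
      exact hgc l t htk
    rw [hτ K m' hm'b hsubset, zero_mul]
  · push_neg at hsub
    obtain ⟨l₀, t, htk, hne⟩ := hsub
    have hzero : (∑ n ∈ boxLt (fun l => 2 ^ k * M l),
        walshValD K n m' * walshD n g : ℝ) = 0 := by
      have hfact : ∀ n : Fin d → ℕ, walshValD K n m' * walshD n g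
          = ∏ l, (walsh (n l) (intervalPoint K (m' l)) * walsh (n l) (g l)) := by
        intro n
        unfold walshValD walshD cubePoint
        rw [← Finset.prod_mul_distrib]
      rw [Finset.sum_congr rfl fun n _ => hfact n]
      unfold boxLt
      rw [← Finset.prod_univ_sum (fun l => Finset.range (2 ^ k * M l))
          (fun l x => walsh x (intervalPoint K (m' l)) * walsh x (g l))]
      exact Finset.prod_eq_zero (Finset.mem_univ l₀) (sum_walsh_walsh_eq_zero htk hne)
    rw [hzero, Complex.ofReal_zero, mul_zero]
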